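/- If G = F ∘ u where u(s,t) = (s, s·t), F : Δ → ℝ² is C^k and regular (invertible differential) on the triangle Δ, and f = ρ ∘ u with ρ : Δ → ℝ a C^k function, then the isogeometric function φ = f ∘ G⁻¹ = ρ ∘ F⁻¹ extends to a C^k function on the closed image F(Δ), despite G being singular along s = 0. -/

import Mathlib

open Filter Topology


open Set in
/-- Let `Δ = {(u,v) : 0 ≤ u ≤ 1, 0 ≤ v ≤ u}` and `u(s,t) = (s, s·t)`, mapping
`[0,1]²` onto `Δ`. If `F` is `C^k` on a neighborhood of `Δ` with everywhere
invertible Jacobian, injective on `Δ`, and `ρ` is `C^k` there, then the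
isogeometric function `φ = (ρ ∘ u) ∘ (F ∘ u)⁻¹ = ρ ∘ F⁻¹` extends to a `C^k`
function on the closed image `F(Δ)`, despite `F ∘ u` being singular along
`s = 0`: there is a `C^k` function `φ` on `F '' Δ` with `φ ∘ G = f` on
`[0,1]²`, where `G = F ∘ u` and `f = ρ ∘ u`. -/
theorem stmt_19 (k : ℕ) (F : ℝ × ℝ → ℝ × ℝ) (ρ : ℝ × ℝ → ℝ) (U : Set (ℝ × ℝ))
    (hU : IsOpen U)
    (hΔU : {q : ℝ × ℝ | 0 ≤ q.1 ∧ q.1 ≤ 1 ∧ 0 ≤ q.2 ∧ q.2 ≤ q.1} ⊆ U)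
    (hF : ContDiffOn ℝ k F U) (hρ : ContDiffOn ℝ k ρ U)
    (hreg : ∀ x ∈ {q : ℝ × ℝ | 0 ≤ q.1 ∧ q.1 ≤ 1 ∧ 0 ≤ q.2 ∧ q.2 ≤ q.1},
      LinearMap.det ((fderiv ℝ F x : (ℝ × ℝ) →L[ℝ] (ℝ × ℝ)) :
        (ℝ × ℝ) →ₗ[ℝ] (ℝ × ℝ)) ≠ 0)
    (hinj : Set.InjOn F {q : ℝ × ℝ | 0 ≤ q.1 ∧ q.1 ≤ 1 ∧ 0 ≤ q.2 ∧ q.2 ≤ q.1}) :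
    ∃ φ : ℝ × ℝ → ℝ,
      ContDiffOn ℝ k φ (F '' {q : ℝ × ℝ | 0 ≤ q.1 ∧ q.1 ≤ 1 ∧ 0 ≤ q.2 ∧ q.2 ≤ q.1}) ∧
      ∀ p ∈ Set.Icc (0 : ℝ) 1 ×ˢ Set.Icc (0 : ℝ) 1,
        φ (F (p.1, p.1 * p.2)) = ρ (p.1, p.1 * p.2) := by
  set Δ : Set (ℝ × ℝ) := {q : ℝ × ℝ | 0 ≤ q.1 ∧ q.1 ≤ 1 ∧ 0 ≤ q.2 ∧ q.2 ≤ q.1} with hΔdef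
  -- Δ is compact
  have hΔclosed : IsClosed Δ := by
    have : Δ = {q : ℝ × ℝ | 0 ≤ q.1} ∩ {q : ℝ × ℝ | q.1 ≤ 1} ∩ {q : ℝ × ℝ | 0 ≤ q.2}
        ∩ {q : ℝ × ℝ | q.2 ≤ q.1} := by
      ext q; simp [hΔdef]; tauto
    rw [this]
    exact (((isClosed_le continuous_const continuous_fst).inter
      (isClosed_le continuous_fst continuous_const)).inter
      (isClosed_le continuous_const continuous_snd)).inter
      (isClosed_le continuous_snd continuous_fst)
  have hΔcompact : IsCompact Δ := by
    refine (isCompact_Icc (a := ((0:ℝ),(0:ℝ))) (b := ((1:ℝ),(1:ℝ)))).of_isClosed_subset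
      hΔclosed ?_
    rintro ⟨a, b⟩ ⟨h1, h2, h3, h4⟩
    exact ⟨⟨h1, h3⟩, ⟨h2, h4.trans h2⟩⟩
  have hFcont : ContinuousOn F Δ := (hF.continuousOn).mono hΔU
  set g : ℝ × ℝ → ℝ × ℝ := Function.invFunOn F Δ with hgdef
  have hgF : ∀ x ∈ Δ, g (F x) = x := fun x hx => hinj.leftInvOn_invFunOn hx
  have hgmem : ∀ y ∈ F '' Δ, g y ∈ Δ := by
    rintro y ⟨x, hx, rfl⟩; exact Function.invFunOn_mem ⟨x, hx, rfl⟩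
  have hFg : ∀ y ∈ F '' Δ, F (g y) = y := by
    rintro y ⟨x, hx, rfl⟩; exact Function.invFunOn_eq ⟨x, hx, rfl⟩
  -- continuity of g on the image
  have hgc : ∀ x₀ ∈ Δ, ContinuousWithinAt g (F '' Δ) (F x₀) := by
    intro x₀ hx₀
    have key : ∀ V ∈ 𝓝 x₀, ∀ᶠ y in 𝓝[F '' Δ] (F x₀), g y ∈ V := by
      intro V hV
      rcases mem_nhds_iff.1 hV with ⟨W, hWV, hWopen, hx₀W⟩
      have hKc : IsClosed (F '' (Δ \ W)) :=
        ((hΔcompact.diff hWopen).image_of_continuousOn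
          (hFcont.mono Set.diff_subset)).isClosed
      have hy₀ : (F '' (Δ \ W))ᶜ ∈ 𝓝 (F x₀) := by
        refine hKc.isOpen_compl.mem_nhds ?_
        rintro ⟨z, ⟨hzΔ, hzW⟩, hz⟩
        exact hzW (hinj hzΔ hx₀ hz ▸ hx₀W)
      filter_upwards [nhdsWithin_le_nhds hy₀, self_mem_nhdsWithin] with y hyK hyIm
      rcases hyIm with ⟨z, hz, rfl⟩
      have hzW : z ∈ W := by
        by_contra h
        exact hyK ⟨z, ⟨hz, h⟩, rfl⟩
      rw [hgF z hz]
      exact hWV hzW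
    rw [ContinuousWithinAt, hgF x₀ hx₀, Filter.tendsto_def]
    exact fun V hV => key V hV
  refine ⟨ρ ∘ g, ?_, ?_⟩
  · rcases Nat.eq_zero_or_pos k with hk0 | hkpos
    · subst hk0
      rw [Nat.cast_zero, contDiffOn_zero]
      have hgcont : ContinuousOn g (F '' Δ) := by
        rintro y₀ ⟨x₀, hx₀, rfl⟩
        exact hgc x₀ hx₀
      exact (hρ.continuousOn.mono hΔU).comp hgcont hgmem
    · have hk1 : (1 : WithTop ℕ∞) ≤ ((k : ℕ∞) : WithTop ℕ∞) := by exact_mod_cast hkpos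
      have hk1' : ((k : ℕ∞) : WithTop ℕ∞) ≠ 0 := by exact_mod_cast hkpos.ne'
      rintro y₀ ⟨x₀, hx₀, rfl⟩
      have hx₀U : U ∈ 𝓝 x₀ := hU.mem_nhds (hΔU hx₀)
      have hρx₀ : ContDiffAt ℝ (k : ℕ∞) ρ x₀ := hρ.contDiffAt hx₀U
      have hFx₀ : ContDiffAt ℝ (k : ℕ∞) F x₀ := hF.contDiffAt hx₀U
      set e : (ℝ × ℝ) ≃L[ℝ] (ℝ × ℝ) :=
        (fderiv ℝ F x₀).toContinuousLinearEquivOfDetNeZero (hreg x₀ hx₀) with hedef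
      have hd : HasFDerivAt F (e : (ℝ × ℝ) →L[ℝ] (ℝ × ℝ)) x₀ := by
        rw [hedef, ContinuousLinearMap.coe_toContinuousLinearEquivOfDetNeZero]
        exact (hFx₀.differentiableAt hk1').hasFDerivAt
      set g' : ℝ × ℝ → ℝ × ℝ := hFx₀.localInverse hd hk1' with hg'def
      have hg'cd : ContDiffAt ℝ (k : ℕ∞) g' (F x₀) := hFx₀.to_localInverse hd hk1'
      have hleft : ∀ᶠ x in 𝓝 x₀, g' (F x) = x :=
        (hFx₀.hasStrictFDerivAt' hd hk1').eventually_left_inverse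
      have hgx₀ : g (F x₀) = x₀ := hgF x₀ hx₀
      have hEq : (ρ ∘ g) =ᶠ[𝓝[F '' Δ] (F x₀)] (ρ ∘ g') := by
        have h1 : ∀ᶠ y in 𝓝[F '' Δ] (F x₀), g' (F (g y)) = g y := by
          have := (hgc x₀ hx₀).tendsto
          rw [hgx₀] at this
          exact this.eventually hleft
        filter_upwards [h1, self_mem_nhdsWithin] with y h2 h3
        simp only [Function.comp_apply]
        rw [← h2, hFg y h3]
      have himg : g' (F x₀) = x₀ := hFx₀.localInverse_apply_image hd hk1'
      have hcomp : ContDiffAt ℝ (k : ℕ∞) (ρ ∘ g') (F x₀) := by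
        rw [← himg] at hρx₀
        exact ContDiffAt.comp _ hρx₀ hg'cd
      refine (hcomp.contDiffWithinAt).congr_of_eventuallyEq hEq ?_
      simp only [Function.comp_apply, hgx₀, himg]
  · rintro ⟨a, b⟩ ⟨ha, hb⟩
    have hmem : ((a, a * b) : ℝ × ℝ) ∈ Δ := by
      refine ⟨ha.1, ha.2, mul_nonneg ha.1 hb.1, ?_⟩
      simpa using mul_le_of_le_one_right ha.1 hb.2
    simp only [Function.comp_apply]
    rw [hgF _ hmem]
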